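/- Let φ be a two-sided geometric probability mass function on ℤ with parameters p, q ∈ (0,1). Then its Shannon entropy satisfies H(φ) − H_∞(φ) = −( p·log p/(1−p)² + q·log q/(1−q)² ) / ( 1/(1−p) + 1/(1−q) − 1 ), and this quantity is strictly less than 1. -/

import Mathlib

open Real

/-- Shannon entropy `H(p) = −∑ p(n) log p(n)`, natural logarithm. -/
noncomputable def shannonEnt (p : ℤ → ℝ) : ℝ := -∑' n, p n * Real.log (p n)

/-- Min-entropy `H_∞(p) = −log sup_n p(n)`. -/
noncomputable def minEnt (p : ℤ → ℝ) : ℝ := -Real.log (⨆ n, p n)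

/-- The two-sided geometric pmf with parameters `p, q ∈ [0,1)` and mode `m`:
`φ(n) = C·p^{n−m}` for `n ≥ m`, `φ(n) = C·q^{m−n}` for `n ≤ m`,
with `C = (1−p)(1−q)/(1−pq)` and `0⁰ = 1`. -/
noncomputable def twoSidedGeom (p q : ℝ) (m : ℤ) : ℤ → ℝ :=
  fun n =>
    (1 - p) * (1 - q) / (1 - p * q) *
      (if m ≤ n then p ^ (n - m).toNat else q ^ (m - n).toNat)

lemma key_log {r : ℝ} (h0 : 0 < r) (h1 : r < 1) :
    0 < Real.log r + (r⁻¹ - r) / 2 := by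
  set f : ℝ → ℝ := fun x => Real.log x + (x⁻¹ - x) / 2 with hf
  have hder : ∀ x ∈ Set.Ioo (0:ℝ) 1, HasDerivAt f (x⁻¹ + (-(x^2)⁻¹ - 1)/2) x := by
    intro x hx
    have hx0 : x ≠ 0 := ne_of_gt hx.1
    exact (Real.hasDerivAt_log hx0).add
      (((hasDerivAt_inv hx0).sub (hasDerivAt_id x)).div_const 2)
  have hanti : StrictAntiOn f (Set.Ioc (0:ℝ) 1) := by
    apply strictAntiOn_of_deriv_neg (convex_Ioc 0 1)
    · intro x hx
      have hx0 : x ≠ 0 := ne_of_gt hx.1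
      exact ((Real.hasDerivAt_log hx0).add
        (((hasDerivAt_inv hx0).sub (hasDerivAt_id x)).div_const 2)).continuousAt.continuousWithinAt
    · intro x hx
      rw [interior_Ioc] at hx
      rw [(hder x hx).deriv]
      have hx0 : (0:ℝ) < x := hx.1
      have hx1 : x < 1 := hx.2
      have hkey : x⁻¹ + (-(x^2)⁻¹ - 1)/2 = -((1-x)^2 / (2*x^2)) := by
        field_simp
        ring
      rw [hkey]
      have : 0 < (1-x)^2 / (2*x^2) := div_pos (pow_pos (by linarith) 2) (by positivity)
      linarith
  have h01 : (1:ℝ) ∈ Set.Ioc (0:ℝ) 1 := by constructor <;> norm_num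
  have hr : r ∈ Set.Ioc (0:ℝ) 1 := ⟨h0, h1.le⟩
  have := hanti hr h01 h1
  have hf1 : f 1 = 0 := by simp [hf]
  rw [hf1] at this
  simpa [hf] using this

lemma key_ineq {r : ℝ} (h0 : 0 < r) (h1 : r < 1) :
    -(r * Real.log r / (1 - r) ^ 2) < (1 + r) / (2 * (1 - r)) := by
  have h1r : (0:ℝ) < 1 - r := by linarith
  have hk := key_log h0 h1
  have hmul : 0 < r / (1 - r)^2 := div_pos h0 (pow_pos h1r 2)
  have h2 : -Real.log r < (r⁻¹ - r)/2 := by linarith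
  have h3 : -(r * Real.log r / (1 - r) ^ 2) = (-Real.log r) * (r / (1-r)^2) := by ring
  have h4 : ((r:ℝ)⁻¹ - r)/2 * (r / (1-r)^2) = (1 + r) / (2 * (1 - r)) := by
    field_simp
    ring
  rw [h3, ← h4]
  exact mul_lt_mul_of_pos_right h2 hmul

/-- For a two-sided geometric pmf `φ` with parameters `p, q ∈ (0,1)`,
`H(φ) − H_∞(φ) = −(p log p/(1−p)² + q log q/(1−q)²)/(1/(1−p) + 1/(1−q) − 1) < 1`. -/
theorem twoSidedGeom_shannon_minEntropy_gap (p q : ℝ)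
    (hp : p ∈ Set.Ioo (0 : ℝ) 1) (hq : q ∈ Set.Ioo (0 : ℝ) 1) (m : ℤ) :
    shannonEnt (twoSidedGeom p q m) - minEnt (twoSidedGeom p q m) =
      -((p * Real.log p / (1 - p) ^ 2 + q * Real.log q / (1 - q) ^ 2) /
        (1 / (1 - p) + 1 / (1 - q) - 1)) ∧
    -((p * Real.log p / (1 - p) ^ 2 + q * Real.log q / (1 - q) ^ 2) /
        (1 / (1 - p) + 1 / (1 - q) - 1)) < 1 := by
  obtain ⟨hp0, hp1⟩ := hp
  obtain ⟨hq0, hq1⟩ := hq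
  have h1p : (0:ℝ) < 1 - p := by linarith
  have h1q : (0:ℝ) < 1 - q := by linarith
  have hpq : p * q < 1 := by nlinarith
  have h1pq : (0:ℝ) < 1 - p * q := by linarith
  set c : ℝ := (1 - p) * (1 - q) / (1 - p * q) with hc_def
  have hc : 0 < c := by positivity
  have hD : 1 / (1 - p) + 1 / (1 - q) - 1 = (1 - p*q) / ((1-p)*(1-q)) := by
    field_simp
    ring
  have hDpos : 0 < 1 / (1 - p) + 1 / (1 - q) - 1 := by
    rw [hD]; positivity
  -- the supremum
  have hval_m : twoSidedGeom p q m m = c := by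
    simp [twoSidedGeom, hc_def]
  have hbdd : BddAbove (Set.range (twoSidedGeom p q m)) := by
    refine ⟨c, ?_⟩
    rintro x ⟨n, rfl⟩
    unfold twoSidedGeom
    rw [← hc_def]
    have : (if m ≤ n then p ^ (n - m).toNat else q ^ (m - n).toNat) ≤ 1 := by
      split
      · exact pow_le_one₀ hp0.le hp1.le
      · exact pow_le_one₀ hq0.le hq1.le
    nlinarith
  have hsup : (⨆ n, twoSidedGeom p q m n) = c := by
    apply le_antisymm
    · apply ciSup_le
      intro n
      unfold twoSidedGeom
      rw [← hc_def]
      have : (if m ≤ n then p ^ (n - m).toNat else q ^ (m - n).toNat) ≤ 1 := by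
        split
        · exact pow_le_one₀ hp0.le hp1.le
        · exact pow_le_one₀ hq0.le hq1.le
      nlinarith
    · rw [← hval_m]
      exact le_ciSup hbdd m
  -- the Shannon entropy
  set f : ℤ → ℝ := fun n => twoSidedGeom p q m n * Real.log (twoSidedGeom p q m n) with hf_def
  set gp : ℕ → ℝ := fun k => (c * p ^ k) * Real.log (c * p ^ k) with hgp_def
  set gq : ℕ → ℝ := fun k => (c * q ^ (k+1)) * Real.log (c * q ^ (k+1)) with hgq_def
  have e2 : (fun n : ℤ => f (n + m)) = Int.rec gp gq := by
    funext n
    cases n with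
    | ofNat k =>
      show f ((k:ℤ) + m) = gp k
      have h1 : m ≤ (k:ℤ) + m := by omega
      have h2 : ((k:ℤ) + m - m).toNat = k := by omega
      simp only [hf_def, twoSidedGeom, if_pos h1, h2, ← hc_def]
      rfl
    | negSucc k =>
      show f (Int.negSucc k + m) = gq k
      have hn : (Int.negSucc k : ℤ) = -((k:ℤ)+1) := Int.negSucc_eq k
      rw [hn]
      have h1 : ¬ (m ≤ -((k:ℤ)+1) + m) := by omega
      have h2 : (m - (-((k:ℤ)+1) + m)).toNat = k + 1 := by omega
      simp only [hf_def, twoSidedGeom, if_neg h1, h2, ← hc_def]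
      rfl
  have hnp : ‖p‖ < 1 := by rw [Real.norm_eq_abs, abs_of_pos hp0]; exact hp1
  have hnq : ‖q‖ < 1 := by rw [Real.norm_eq_abs, abs_of_pos hq0]; exact hq1
  have hgeo_p : HasSum (fun k : ℕ => p ^ k) (1 - p)⁻¹ := hasSum_geometric_of_lt_one hp0.le hp1
  have hgeo_q : HasSum (fun k : ℕ => q ^ k) (1 - q)⁻¹ := hasSum_geometric_of_lt_one hq0.le hq1
  have hkgeo_p : HasSum (fun k : ℕ => (k:ℝ) * p ^ k) (p / (1 - p)^2) :=
    hasSum_coe_mul_geometric_of_norm_lt_one hnp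
  have hkgeo_q : HasSum (fun k : ℕ => (k:ℝ) * q ^ k) (q / (1 - q)^2) :=
    hasSum_coe_mul_geometric_of_norm_lt_one hnq
  have hgp_eq : gp = fun k : ℕ =>
      (c * Real.log c) * p ^ k + (c * Real.log p) * ((k:ℝ) * p ^ k) := by
    funext k
    have : Real.log (c * p ^ k) = Real.log c + (k:ℝ) * Real.log p := by
      rw [Real.log_mul hc.ne' (pow_pos hp0 k).ne', Real.log_pow]
    simp only [hgp_def, this]
    ring
  have hgq_eq : gq = fun k : ℕ =>
      (c * q * (Real.log c + Real.log q)) * q ^ k + (c * q * Real.log q) * ((k:ℝ) * q ^ k) := by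
    funext k
    have : Real.log (c * q ^ (k+1)) = Real.log c + ((k:ℝ)+1) * Real.log q := by
      rw [Real.log_mul hc.ne' (pow_pos hq0 (k+1)).ne', Real.log_pow]
      push_cast
      ring
    simp only [hgq_def]
    rw [this, pow_succ]
    ring
  have hSp : HasSum gp ((c * Real.log c) * (1-p)⁻¹ + (c * Real.log p) * (p / (1-p)^2)) := by
    rw [hgp_eq]
    exact (hgeo_p.mul_left _).add (hkgeo_p.mul_left _)
  have hSq : HasSum gq ((c * q * (Real.log c + Real.log q)) * (1-q)⁻¹
      + (c * q * Real.log q) * (q / (1-q)^2)) := by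
    rw [hgq_eq]
    exact (hgeo_q.mul_left _).add (hkgeo_q.mul_left _)
  have htot : HasSum (Int.rec gp gq : ℤ → ℝ)
      (((c * Real.log c) * (1-p)⁻¹ + (c * Real.log p) * (p / (1-p)^2))
        + ((c * q * (Real.log c + Real.log q)) * (1-q)⁻¹
          + (c * q * Real.log q) * (q / (1-q)^2))) := hSp.int_rec hSq
  have hsum_f : ∑' n, f n =
      ((c * Real.log c) * (1-p)⁻¹ + (c * Real.log p) * (p / (1-p)^2))
        + ((c * q * (Real.log c + Real.log q)) * (1-q)⁻¹
          + (c * q * Real.log q) * (q / (1-q)^2)) := by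
    rw [← (Equiv.addRight m).tsum_eq f]
    have : (fun n : ℤ => f (Equiv.addRight m n)) = Int.rec gp gq := e2
    rw [this]
    exact htot.tsum_eq
  have hshannon : shannonEnt (twoSidedGeom p q m) =
      -(((c * Real.log c) * (1-p)⁻¹ + (c * Real.log p) * (p / (1-p)^2))
        + ((c * q * (Real.log c + Real.log q)) * (1-q)⁻¹
          + (c * q * Real.log q) * (q / (1-q)^2))) := by
    rw [shannonEnt, ← hf_def, hsum_f]
  have hmin : minEnt (twoSidedGeom p q m) = -Real.log c := by
    rw [minEnt, hsup]
  constructor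
  · rw [hshannon, hmin, hD, hc_def]
    have h2p : (1-p) ≠ 0 := h1p.ne'
    have h2q : (1-q) ≠ 0 := h1q.ne'
    have h2pq : (1-p*q) ≠ 0 := h1pq.ne'
    field_simp
    ring
  · rw [hD, ← neg_div, div_lt_one (by positivity : (0:ℝ) < (1 - p*q) / ((1-p)*(1-q)))]
    have kp := key_ineq hp0 hp1
    have kq := key_ineq hq0 hq1
    have hsum : (1 + p) / (2 * (1 - p)) + (1 + q) / (2 * (1 - q))
        = (1 - p*q) / ((1-p)*(1-q)) := by
      field_simp
      ring
    calc -(p * Real.log p / (1 - p) ^ 2 + q * Real.log q / (1 - q) ^ 2)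
        = -(p * Real.log p / (1 - p) ^ 2) + -(q * Real.log q / (1 - q) ^ 2) := by ring
      _ < (1 + p) / (2 * (1 - p)) + (1 + q) / (2 * (1 - q)) := by
          exact add_lt_add kp kq
      _ = (1 - p*q) / ((1-p)*(1-q)) := hsum
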